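/- Let M = [[A, 0],[0, B]] be a positive semidefinite block-diagonal matrix with 2×2 blocks A and B, and p > 2 with conjugate index q (1/p + 1/q = 1). If N = [[K, 0],[0, L]] is positive semidefinite block-diagonal with Tr(MN) = ||M||_p ||N||_q, then ||M||_p ||N||_q ≤ Tr(M_r N_r) ≤ ||M_r||_p ||N_r||_q, where X_r denotes the entrywise rearrangement pairing entrywise maxima with maxima and minima with minima across the two blocks. -/

import Mathlib

open scoped Matrix

/-- The Schatten `p`-norm `(Tr (M* M)^{p/2})^{1/p}` of a real matrix. -/
noncomputable def schattenNorm {n : Type*} [Fintype n] [DecidableEq n]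
    (p : ℝ) (M : Matrix n n ℝ) : ℝ :=
  (∑ i, (Matrix.isHermitian_conjTranspose_mul_self M).eigenvalues i ^ (p / 2)) ^ (1 / p)

section Helpers

open Polynomial

namespace DualRearrange

lemma rearr {u v w z : ℝ} (hu : 0 ≤ u) (hv : 0 ≤ v) (hw : 0 ≤ w) (hz : 0 ≤ z) :
    u * w + v * z ≤ max u v * max w z + min u v * min w z := by
  rcases le_total u v with h | h <;> rcases le_total w z with h' | h'
  · rw [max_eq_right h, max_eq_right h', min_eq_left h, min_eq_left h']; nlinarith
  · rw [max_eq_right h, max_eq_left h', min_eq_left h, min_eq_right h']; nlinarith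
  · rw [max_eq_left h, max_eq_right h', min_eq_right h, min_eq_left h']; nlinarith
  · rw [max_eq_left h, max_eq_left h', min_eq_right h, min_eq_right h']

lemma charpoly_conj {n : Type*} [Fintype n] [DecidableEq n] (U V A : Matrix n n ℝ)
    (h1 : U * V = 1) (h2 : V * U = 1) : (U * A * V).charpoly = A.charpoly := by
  have key : (U * A * V).charmatrix =
      U.map (C : ℝ →+* ℝ[X]) * A.charmatrix * V.map (C : ℝ →+* ℝ[X]) := by
    unfold Matrix.charmatrix
    rw [Matrix.mul_sub, Matrix.sub_mul]
    congr 1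
    · rw [Matrix.mul_assoc,
        (Matrix.scalar_commute (X : ℝ[X]) (fun r' => Commute.all _ _) (V.map C)).eq,
        ← Matrix.mul_assoc, ← Matrix.map_mul, h1,
        Matrix.map_one _ (map_zero C) (map_one C), Matrix.one_mul]
    · simp only [RingHom.mapMatrix_apply, Matrix.map_mul]
  unfold Matrix.charpoly
  rw [key, Matrix.det_mul, Matrix.det_mul, mul_right_comm, ← Matrix.det_mul, ← Matrix.map_mul, h1,
    Matrix.map_one _ (map_zero C) (map_one C), Matrix.det_one, one_mul]

lemma charpoly_diagonal {n : Type*} [Fintype n] [DecidableEq n] (d : n → ℝ) :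
    (Matrix.diagonal d).charpoly = ∏ i, (X - C (d i)) := by
  have : (Matrix.diagonal d).charmatrix = Matrix.diagonal (fun i => X - C (d i)) := by
    ext i j
    by_cases h : i = j
    · subst h; simp
    · simp [Matrix.charmatrix_apply_ne _ _ _ h, Matrix.diagonal_apply_ne _ h]
  rw [Matrix.charpoly, this, Matrix.det_diagonal]

lemma charpoly_eig {n : Type*} [Fintype n] [DecidableEq n] {H : Matrix n n ℝ}
    (hH : H.IsHermitian) : H.charpoly = ∏ i, (X - C (hH.eigenvalues i)) := by
  conv_lhs => rw [hH.spectral_theorem, Unitary.conjStarAlgAut_apply]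
  rw [charpoly_conj _ _ _
    (by simpa using (Matrix.mem_unitaryGroup_iff).mp (hH.eigenvectorUnitary).2)
    (by simpa using (Matrix.mem_unitaryGroup_iff').mp (hH.eigenvectorUnitary).2)]
  simpa using charpoly_diagonal hH.eigenvalues

lemma sum_eig {n : Type*} [Fintype n] [DecidableEq n] {H : Matrix n n ℝ}
    (hH : H.IsHermitian) : ∑ i, hH.eigenvalues i = H.trace := by
  conv_rhs => rw [hH.spectral_theorem, Unitary.conjStarAlgAut_apply]
  rw [Matrix.trace_mul_cycle]
  have : (star (hH.eigenvectorUnitary : Matrix n n ℝ)) * (hH.eigenvectorUnitary : Matrix n n ℝ) = 1 := by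
    simpa using (Matrix.mem_unitaryGroup_iff').mp (hH.eigenvectorUnitary).2
  rw [this, Matrix.one_mul, Matrix.trace_diagonal]
  simp

lemma eig_blocks {m : Type*} [Fintype m] [DecidableEq m]
    (H1 H2 : Matrix m m ℝ) (h1 : H1.IsHermitian) (h2 : H2.IsHermitian)
    (hH : (Matrix.fromBlocks H1 0 0 H2).IsHermitian) (f : ℝ → ℝ) :
    ∑ i, f (hH.eigenvalues i) = ∑ i, f (h1.eigenvalues i) + ∑ i, f (h2.eigenvalues i) := by
  have hmul : (Finset.univ.val.map hH.eigenvalues) =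
      Finset.univ.val.map h1.eigenvalues + Finset.univ.val.map h2.eigenvalues := by
    have hc : (Matrix.fromBlocks H1 0 0 H2).charpoly = H1.charpoly * H2.charpoly :=
      Matrix.charpoly_fromBlocks_zero₁₂ _ _ _
    rw [charpoly_eig hH, charpoly_eig h1, charpoly_eig h2] at hc
    rw [Finset.prod_eq_multiset_prod, Finset.prod_eq_multiset_prod,
      Finset.prod_eq_multiset_prod] at hc
    have hc2 : ((Finset.univ.val.map hH.eigenvalues).map (fun a => X - C a)).prod =
        (((Finset.univ.val.map h1.eigenvalues) + (Finset.univ.val.map h2.eigenvalues)).map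
          (fun a => X - C a)).prod := by
      rw [Multiset.map_add, Multiset.prod_add]
      simpa [Multiset.map_map, Function.comp] using hc
    have := congrArg Polynomial.roots hc2
    rwa [Polynomial.roots_multiset_prod_X_sub_C, Polynomial.roots_multiset_prod_X_sub_C] at this
  calc ∑ i, f (hH.eigenvalues i) = ((Finset.univ.val.map hH.eigenvalues).map f).sum := by
        rw [Multiset.map_map]; rfl
    _ = ((Finset.univ.val.map h1.eigenvalues).map f).sum
        + ((Finset.univ.val.map h2.eigenvalues).map f).sum := by
        rw [hmul, Multiset.map_add, Multiset.sum_add]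
    _ = _ := by rw [Multiset.map_map, Multiset.map_map]; rfl

lemma pair_eq {x y u v : ℝ} (hs : x + y = u + v) (hm : x * y = u * v) :
    (x = u ∧ y = v) ∨ (x = v ∧ y = u) := by
  have h : (x - u) * (x - v) = 0 := by linear_combination x * hs - hm
  rcases mul_eq_zero.mp h with h | h
  · left; have : x = u := by linarith [sub_eq_zero.mp h]
    exact ⟨this, by linarith⟩
  · right; have : x = v := by linarith [sub_eq_zero.mp h]
    exact ⟨this, by linarith⟩

lemma eig2_pair {H : Matrix (Fin 2) (Fin 2) ℝ} (hH : H.IsHermitian) {α β : ℝ}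
    (hsum : α + β = H.trace) (hprod : α * β = H.det) (f : ℝ → ℝ) :
    ∑ i, f (hH.eigenvalues i) = f α + f β := by
  have h1 : hH.eigenvalues 0 + hH.eigenvalues 1 = H.trace := by
    simpa [Fin.sum_univ_two] using sum_eig hH
  have h2 : hH.eigenvalues 0 * hH.eigenvalues 1 = H.det := by
    have := hH.det_eq_prod_eigenvalues
    simp only [Fin.prod_univ_two] at this
    exact_mod_cast this.symm
  have hs' : hH.eigenvalues 0 + hH.eigenvalues 1 = α + β := by rw [h1, hsum]
  have hm' : hH.eigenvalues 0 * hH.eigenvalues 1 = α * β := by rw [h2, hprod]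
  rcases pair_eq hs' hm' with ⟨ha, hb⟩ | ⟨ha, hb⟩
  · rw [Fin.sum_univ_two, ha, hb]
  · rw [Fin.sum_univ_two, ha, hb]
    exact add_comm (f β) (f α)

lemma eig_congr {n : Type*} [Fintype n] [DecidableEq n] {A B : Matrix n n ℝ}
    (h : A = B) (hA : A.IsHermitian) (hB : B.IsHermitian) (f : ℝ → ℝ) :
    ∑ i, f (hA.eigenvalues i) = ∑ i, f (hB.eigenvalues i) := by subst h; rfl

noncomputable def gfun (a b c : ℝ) : ℝ := Real.sqrt ((a-c)^2 + 4*b^2)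
noncomputable def lamP (a b c : ℝ) : ℝ := ((a+c) + gfun a b c)/2
noncomputable def lamM (a b c : ℝ) : ℝ := ((a+c) - gfun a b c)/2

lemma g_nonneg (a b c : ℝ) : 0 ≤ gfun a b c := Real.sqrt_nonneg _

lemma g_sq (a b c : ℝ) : gfun a b c ^ 2 = (a-c)^2 + 4*b^2 :=
  Real.sq_sqrt (by positivity)

lemma lam_sq_add (a b c : ℝ) : lamP a b c ^ 2 + lamM a b c ^ 2 = a^2 + 2*b^2 + c^2 := by
  have hg := g_sq a b c
  unfold lamP lamM
  linear_combination (1/2) * hg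

lemma lam_mul (a b c : ℝ) : lamP a b c * lamM a b c = a*c - b^2 := by
  have hg := g_sq a b c
  unfold lamP lamM
  linear_combination (-1/4) * hg

lemma lam_sq_mul (a b c : ℝ) : lamP a b c ^ 2 * lamM a b c ^ 2 = (a*c - b^2)^2 := by
  rw [← mul_pow, lam_mul]

lemma cauchy_g (a b c d e f : ℝ) :
    (a-c)*(d-f) + 4*(b*e) ≤ gfun a b c * gfun d e f := by
  have hg := g_sq a b c
  have hh := g_sq d e f
  have hg0 := g_nonneg a b c
  have hh0 := g_nonneg d e f
  have hgh : (gfun a b c * gfun d e f)^2 = ((a-c)^2 + 4*b^2) * ((d-f)^2 + 4*e^2) := by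
    rw [mul_pow, hg, hh]
  nlinarith [mul_nonneg hg0 hh0, sq_nonneg (2*b*(d-f) - 2*e*(a-c)),
    sq_nonneg (gfun a b c * gfun d e f + ((a-c)*(d-f) + 4*(b*e)))]

lemma vonNeumann (a b c d e f : ℝ) :
    a*d + b*e + b*e + c*f ≤
      max |lamP a b c| |lamM a b c| * max |lamP d e f| |lamM d e f|
      + min |lamP a b c| |lamM a b c| * min |lamP d e f| |lamM d e f| := by
  have key := cauchy_g a b c d e f
  have step1 : a*d + b*e + b*e + c*f ≤ lamP a b c * lamP d e f + lamM a b c * lamM d e f := by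
    have expand : lamP a b c * lamP d e f + lamM a b c * lamM d e f
        = ((a+c)*(d+f) + gfun a b c * gfun d e f)/2 := by unfold lamP lamM; ring
    rw [expand]; linarith
  have step2 : lamP a b c * lamP d e f + lamM a b c * lamM d e f ≤
      |lamP a b c| * |lamP d e f| + |lamM a b c| * |lamM d e f| :=
    add_le_add ((le_abs_self _).trans (abs_mul _ _).le)
      ((le_abs_self _).trans (abs_mul _ _).le)
  exact step1.trans (step2.trans
    (rearr (abs_nonneg _) (abs_nonneg _) (abs_nonneg _) (abs_nonneg _)))

lemma sq_rpow (x : ℝ) (r : ℝ) : (x^2 : ℝ) ^ (r/2) = |x| ^ r := by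
  rw [← sq_abs, ← Real.rpow_natCast |x| 2, ← Real.rpow_mul (abs_nonneg x)]
  norm_num
  congr 1
  ring

lemma maxmin_rpow (x y : ℝ) (r : ℝ) : max x y ^ r + min x y ^ r = x ^ r + y ^ r := by
  rcases le_total x y with h | h
  · rw [max_eq_right h, min_eq_left h, add_comm]
  · rw [max_eq_left h, min_eq_right h]


lemma schatten_block (r : ℝ) (X Y : Matrix (Fin 2) (Fin 2) ℝ)
    (hX : X 1 0 = X 0 1) (hY : Y 1 0 = Y 0 1) :
    ∑ i, (Matrix.isHermitian_conjTranspose_mul_self (Matrix.fromBlocks X 0 0 Y)).eigenvalues i ^ (r/2)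
      = (|lamP (X 0 0) (X 0 1) (X 1 1)| ^ r + |lamM (X 0 0) (X 0 1) (X 1 1)| ^ r)
        + (|lamP (Y 0 0) (Y 0 1) (Y 1 1)| ^ r + |lamM (Y 0 0) (Y 0 1) (Y 1 1)| ^ r) := by
  have hEq : (Matrix.fromBlocks X 0 0 Y)ᴴ * (Matrix.fromBlocks X 0 0 Y)
      = Matrix.fromBlocks (Xᴴ * X) 0 0 (Yᴴ * Y) := by
    simp [Matrix.fromBlocks_conjTranspose, Matrix.fromBlocks_transpose, Matrix.fromBlocks_multiply]
  have h1 : (Xᴴ * X).IsHermitian := Matrix.isHermitian_conjTranspose_mul_self X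
  have h2 : (Yᴴ * Y).IsHermitian := Matrix.isHermitian_conjTranspose_mul_self Y
  have hB : (Matrix.fromBlocks (Xᴴ * X) 0 0 (Yᴴ * Y)).IsHermitian := by
    rw [← hEq]; exact Matrix.isHermitian_conjTranspose_mul_self _
  have e1 := eig_congr hEq (Matrix.isHermitian_conjTranspose_mul_self _) hB (fun t => t ^ (r/2))
  have e2 := eig_blocks _ _ h1 h2 hB (fun t => t ^ (r/2))
  have trX : (Xᴴ * X).trace = (X 0 0)^2 + 2*(X 0 1)^2 + (X 1 1)^2 := by
    simp [Matrix.trace, Matrix.diag, Matrix.mul_apply, Fin.sum_univ_two,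
      Matrix.conjTranspose_apply, hX]
    ring
  have detX : (Xᴴ * X).det = ((X 0 0)*(X 1 1) - (X 0 1)^2)^2 := by
    rw [Matrix.det_mul, Matrix.det_conjTranspose, Matrix.det_fin_two, hX]
    simp
    ring
  have trY : (Yᴴ * Y).trace = (Y 0 0)^2 + 2*(Y 0 1)^2 + (Y 1 1)^2 := by
    simp [Matrix.trace, Matrix.diag, Matrix.mul_apply, Fin.sum_univ_two,
      Matrix.conjTranspose_apply, hY]
    ring
  have detY : (Yᴴ * Y).det = ((Y 0 0)*(Y 1 1) - (Y 0 1)^2)^2 := by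
    rw [Matrix.det_mul, Matrix.det_conjTranspose, Matrix.det_fin_two, hY]
    simp
    ring
  have e3 := eig2_pair h1 (α := lamP (X 0 0) (X 0 1) (X 1 1) ^ 2)
    (β := lamM (X 0 0) (X 0 1) (X 1 1) ^ 2)
    (by rw [trX, lam_sq_add])
    (by rw [detX, lam_sq_mul]) (fun t => t ^ (r/2))
  have e4 := eig2_pair h2 (α := lamP (Y 0 0) (Y 0 1) (Y 1 1) ^ 2)
    (β := lamM (Y 0 0) (Y 0 1) (Y 1 1) ^ 2)
    (by rw [trY, lam_sq_add])
    (by rw [detY, lam_sq_mul]) (fun t => t ^ (r/2))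
  rw [e1, e2, e3, e4, sq_rpow, sq_rpow, sq_rpow, sq_rpow]


lemma term_le (x y z w : ℝ) :
    x*y + z*w ≤ max |x| |z| * max |y| |w| + min |x| |z| * min |y| |w| :=
  le_trans (add_le_add ((le_abs_self _).trans (abs_mul _ _).le)
      ((le_abs_self _).trans (abs_mul _ _).le))
    (rearr (abs_nonneg _) (abs_nonneg _) (abs_nonneg _) (abs_nonneg _))

lemma expand_trace (X Z W V : Matrix (Fin 2) (Fin 2) ℝ) :
    (Matrix.fromBlocks X 0 0 W * Matrix.fromBlocks Z 0 0 V).trace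
      = (X 0 0 * Z 0 0 + X 0 1 * Z 1 0 + X 1 0 * Z 0 1 + X 1 1 * Z 1 1)
        + (W 0 0 * V 0 0 + W 0 1 * V 1 0 + W 1 0 * V 0 1 + W 1 1 * V 1 1) := by
  simp [Matrix.fromBlocks_multiply, Matrix.trace, Matrix.diag, Fintype.sum_sum_type,
    Matrix.fromBlocks_apply₁₁, Matrix.fromBlocks_apply₂₂, Matrix.mul_apply, Fin.sum_univ_two]
  ring

end DualRearrange

end Helpers

open DualRearrange

theorem duality_rearrangement (p q : ℝ) (hp : 2 < p) (hpq : 1 / p + 1 / q = 1)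
    (A B K L : Matrix (Fin 2) (Fin 2) ℝ)
    (hM : (Matrix.fromBlocks A 0 0 B).PosSemidef)
    (hN : (Matrix.fromBlocks K 0 0 L).PosSemidef)
    (hdual : (Matrix.fromBlocks A 0 0 B * Matrix.fromBlocks K 0 0 L).trace =
      schattenNorm p (Matrix.fromBlocks A 0 0 B) *
        schattenNorm q (Matrix.fromBlocks K 0 0 L)) :
    schattenNorm p (Matrix.fromBlocks A 0 0 B) *
        schattenNorm q (Matrix.fromBlocks K 0 0 L) ≤
      (Matrix.fromBlocks (Matrix.of fun i j => max |A i j| |B i j|) 0 0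
          (Matrix.of fun i j => min |A i j| |B i j|) *
        Matrix.fromBlocks (Matrix.of fun i j => max |K i j| |L i j|) 0 0
          (Matrix.of fun i j => min |K i j| |L i j|)).trace ∧
    (Matrix.fromBlocks (Matrix.of fun i j => max |A i j| |B i j|) 0 0
          (Matrix.of fun i j => min |A i j| |B i j|) *
        Matrix.fromBlocks (Matrix.of fun i j => max |K i j| |L i j|) 0 0
          (Matrix.of fun i j => min |K i j| |L i j|)).trace ≤
      schattenNorm p (Matrix.fromBlocks (Matrix.of fun i j => max |A i j| |B i j|) 0 0
          (Matrix.of fun i j => min |A i j| |B i j|)) *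
        schattenNorm q (Matrix.fromBlocks (Matrix.of fun i j => max |K i j| |L i j|) 0 0
          (Matrix.of fun i j => min |K i j| |L i j|)) := by
  have hA : A 1 0 = A 0 1 := by
    simpa using (congrFun (congrFun hM.1 (Sum.inl 1)) (Sum.inl 0)).symm
  have hB : B 1 0 = B 0 1 := by
    simpa using (congrFun (congrFun hM.1 (Sum.inr 1)) (Sum.inr 0)).symm
  have hK : K 1 0 = K 0 1 := by
    simpa using (congrFun (congrFun hN.1 (Sum.inl 1)) (Sum.inl 0)).symm
  have hL : L 1 0 = L 0 1 := by
    simpa using (congrFun (congrFun hN.1 (Sum.inr 1)) (Sum.inr 0)).symm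
  set Ar : Matrix (Fin 2) (Fin 2) ℝ := Matrix.of fun i j => max |A i j| |B i j| with hAr
  set Br : Matrix (Fin 2) (Fin 2) ℝ := Matrix.of fun i j => min |A i j| |B i j| with hBr
  set Kr : Matrix (Fin 2) (Fin 2) ℝ := Matrix.of fun i j => max |K i j| |L i j| with hKr
  set Lr : Matrix (Fin 2) (Fin 2) ℝ := Matrix.of fun i j => min |K i j| |L i j| with hLr
  have hsymAr : Ar 1 0 = Ar 0 1 := by simp [hAr, hA, hB]
  have hsymBr : Br 1 0 = Br 0 1 := by simp [hBr, hA, hB]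
  have hsymKr : Kr 1 0 = Kr 0 1 := by simp [hKr, hK, hL]
  have hsymLr : Lr 1 0 = Lr 0 1 := by simp [hLr, hK, hL]
  constructor
  · rw [← hdual, expand_trace, expand_trace]
    have t00 := term_le (A 0 0) (K 0 0) (B 0 0) (L 0 0)
    have t01 := term_le (A 0 1) (K 1 0) (B 0 1) (L 1 0)
    have t10 := term_le (A 1 0) (K 0 1) (B 1 0) (L 0 1)
    have t11 := term_le (A 1 1) (K 1 1) (B 1 1) (L 1 1)
    simp only [hAr, hBr, hKr, hLr, Matrix.of_apply]
    linarith
  · rw [expand_trace]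
    set PA := lamP (Ar 0 0) (Ar 0 1) (Ar 1 1) with hPA
    set MA := lamM (Ar 0 0) (Ar 0 1) (Ar 1 1) with hMA
    set PB := lamP (Br 0 0) (Br 0 1) (Br 1 1) with hPB
    set MB := lamM (Br 0 0) (Br 0 1) (Br 1 1) with hMB
    set PK := lamP (Kr 0 0) (Kr 0 1) (Kr 1 1) with hPK
    set MK := lamM (Kr 0 0) (Kr 0 1) (Kr 1 1) with hMK
    set PL := lamP (Lr 0 0) (Lr 0 1) (Lr 1 1) with hPL
    set ML := lamM (Lr 0 0) (Lr 0 1) (Lr 1 1) with hML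
    have v1 := vonNeumann (Ar 0 0) (Ar 0 1) (Ar 1 1) (Kr 0 0) (Kr 0 1) (Kr 1 1)
    have v2 := vonNeumann (Br 0 0) (Br 0 1) (Br 1 1) (Lr 0 0) (Lr 0 1) (Lr 1 1)
    rw [← hPA, ← hMA, ← hPK, ← hMK] at v1
    rw [← hPB, ← hMB, ← hPL, ← hML] at v2
    have hpq' : p.HolderConjugate q := Real.holderConjugate_iff.mpr ⟨by linarith, by simpa [one_div] using hpq⟩
    have hold := Real.inner_le_Lp_mul_Lq_of_nonneg (s := (Finset.univ : Finset (Fin 4)))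
      (f := ![max |PA| |MA|, min |PA| |MA|, max |PB| |MB|, min |PB| |MB|])
      (g := ![max |PK| |MK|, min |PK| |MK|, max |PL| |ML|, min |PL| |ML|]) hpq'
      (by intro i _; fin_cases i <;>
        simp [le_max_iff, le_min_iff, abs_nonneg])
      (by intro i _; fin_cases i <;>
        simp [le_max_iff, le_min_iff, abs_nonneg])
    simp only [Fin.sum_univ_four, Matrix.cons_val_zero, Matrix.cons_val_one, Matrix.head_cons,
      Matrix.cons_val_two, Matrix.tail_cons, Matrix.cons_val_three] at hold
    have hsp : schattenNorm p (Matrix.fromBlocks Ar 0 0 Br)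
        = (max |PA| |MA| ^ p + min |PA| |MA| ^ p
            + (max |PB| |MB| ^ p + min |PB| |MB| ^ p)) ^ (1/p) := by
      rw [schattenNorm, schatten_block p Ar Br hsymAr hsymBr, maxmin_rpow, maxmin_rpow,
        ← hPA, ← hMA, ← hPB, ← hMB]
    have hsq : schattenNorm q (Matrix.fromBlocks Kr 0 0 Lr)
        = (max |PK| |MK| ^ q + min |PK| |MK| ^ q
            + (max |PL| |ML| ^ q + min |PL| |ML| ^ q)) ^ (1/q) := by
      rw [schattenNorm, schatten_block q Kr Lr hsymKr hsymLr, maxmin_rpow, maxmin_rpow,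
        ← hPK, ← hMK, ← hPL, ← hML]
    rw [hsp, hsq]
    calc (Ar 0 0 * Kr 0 0 + Ar 0 1 * Kr 1 0 + Ar 1 0 * Kr 0 1 + Ar 1 1 * Kr 1 1)
          + (Br 0 0 * Lr 0 0 + Br 0 1 * Lr 1 0 + Br 1 0 * Lr 0 1 + Br 1 1 * Lr 1 1)
        ≤ (max |PA| |MA| * max |PK| |MK| + min |PA| |MA| * min |PK| |MK|)
          + (max |PB| |MB| * max |PL| |ML| + min |PB| |MB| * min |PL| |ML|) := by
          rw [hsymAr, hsymKr, hsymBr, hsymLr] at *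
          linarith
      _ ≤ _ := by
          refine le_trans (le_of_eq (by ring)) (hold.trans (le_of_eq ?_))
          congr 1
          · congr 1
            ring
          · congr 1
            ring
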